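/- Let V be an inner product space, N ∈ ℕ, and v_1, …, v_N ∈ V. Then for every integer M with 1 ≤ M ≤ N, ‖∑_{n=1}^N v_n‖² ≤ 2 M⁻¹ N ∑_{n=1}^N ‖v_n‖² + 4 M⁻¹ N ∑_{m=1}^M |∑_{n=1}^{N-m} ⟨v_{n+m}, v_n⟩|. -/

import Mathlib

open Finset
open scoped RealInnerProductSpace

private lemma sum_shift_aux {W : Type*} [AddCommMonoid W] (g : ℕ → W) (K h L : ℕ)
    (hg : ∀ k, k ∉ Finset.Icc 1 K → g k = 0) (hKL : K + h ≤ L) :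
    ∑ n ∈ Finset.Icc 1 L, g (n - h) = ∑ k ∈ Finset.Icc 1 K, g k := by
  have hsub : Finset.Icc (1 + h) (K + h) ⊆ Finset.Icc 1 L :=
    Finset.Icc_subset_Icc (by omega) (by omega)
  rw [← Finset.sum_subset hsub (fun x hx hx' => hg _ (by
    simp only [Finset.mem_Icc] at hx hx' ⊢; omega))]
  rw [show Finset.Icc (1 + h) (K + h) = Finset.map (addRightEmbedding h) (Finset.Icc 1 K) by
    rw [Finset.map_add_right_Icc], Finset.sum_map]
  exact Finset.sum_congr rfl fun k _ => by simp

private lemma sum_abs_image_le (c : ℕ → ℝ) (M : ℕ) (s : Finset ℕ) (δ : ℕ → ℕ)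
    (hinj : ∀ x ∈ s, ∀ y ∈ s, δ x = δ y → x = y)
    (hmem : ∀ x ∈ s, δ x ∈ Finset.Icc 1 M) :
    ∑ x ∈ s, |c (δ x)| ≤ ∑ m ∈ Finset.Icc 1 M, |c m| := by
  rw [← Finset.sum_image (f := fun m => |c m|) hinj]
  exact Finset.sum_le_sum_of_subset_of_nonneg
    (fun m hm => by obtain ⟨x, hx, rfl⟩ := Finset.mem_image.1 hm; exact hmem x hx)
    (fun _ _ _ => abs_nonneg _)

private lemma norm_sum_sq_le_card {V : Type*} [NormedAddCommGroup V] [InnerProductSpace ℝ V]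
    (s : Finset ℕ) (f : ℕ → V) :
    ‖∑ n ∈ s, f n‖ ^ 2 ≤ (s.card : ℝ) * ∑ n ∈ s, ‖f n‖ ^ 2 := by
  calc ‖∑ n ∈ s, f n‖ ^ 2 ≤ (∑ n ∈ s, ‖f n‖) ^ 2 := by
        apply pow_le_pow_left₀ (norm_nonneg _) (norm_sum_le _ _)
    _ ≤ (s.card : ℝ) * ∑ n ∈ s, ‖f n‖ ^ 2 := sq_sum_le_card_mul_sum_sq

/-- Van der Corput's inequality for vectors in a real inner product space. -/
theorem van_der_corput_inequality
    {V : Type*} [NormedAddCommGroup V] [InnerProductSpace ℝ V]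
    (N M : ℕ) (hM1 : 1 ≤ M) (hMN : M ≤ N) (v : ℕ → V) :
    ‖∑ n ∈ Finset.Icc 1 N, v n‖ ^ 2 ≤
      2 * (M : ℝ)⁻¹ * N * ∑ n ∈ Finset.Icc 1 N, ‖v n‖ ^ 2 +
        4 * (M : ℝ)⁻¹ * N *
          ∑ m ∈ Finset.Icc 1 M, |∑ n ∈ Finset.Icc 1 (N - m), (inner ℝ (v (n + m)) (v n) : ℝ)| := by
  classical
  set u : ℕ → V := fun k => if k ∈ Finset.Icc 1 N then v k else 0 with hu_def
  set S : V := ∑ n ∈ Finset.Icc 1 N, v n with hS_def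
  set T : ℝ := ∑ n ∈ Finset.Icc 1 N, ‖v n‖ ^ 2 with hT_def
  set c : ℕ → ℝ := fun m => ∑ n ∈ Finset.Icc 1 (N - m), (inner ℝ (v (n + m)) (v n) : ℝ) with hc_def
  set L : ℕ := N + M - 1 with hL_def
  set C : ℝ := ∑ m ∈ Finset.Icc 1 M, |c m| with hC_def
  have hu_supp : ∀ k, k ∉ Finset.Icc 1 N → u k = 0 := fun k hk => if_neg hk
  have hu_eq : ∀ k ∈ Finset.Icc 1 N, u k = v k := fun k hk => if_pos hk
  -- the shifted sums
  set w : ℕ → V := fun n => ∑ h ∈ Finset.range M, u (n - h) with hw_def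
  have hT_nonneg : 0 ≤ T := Finset.sum_nonneg fun n _ => by positivity
  have hC_nonneg : 0 ≤ C := Finset.sum_nonneg fun m _ => abs_nonneg _
  -- Step 1: ∑ w = M • S
  have hMS : ∑ n ∈ Finset.Icc 1 L, w n = M • S := by
    rw [hw_def]
    rw [Finset.sum_comm]
    have : ∀ h ∈ Finset.range M, ∑ n ∈ Finset.Icc 1 L, u (n - h) = S := by
      intro h hh
      rw [Finset.mem_range] at hh
      rw [sum_shift_aux u N h L hu_supp (by omega)]
      exact Finset.sum_congr rfl hu_eq
    rw [Finset.sum_congr rfl this, Finset.sum_const, Finset.card_range]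
  -- Step 2: expansion of ‖w n‖²
  have hexp : ∑ n ∈ Finset.Icc 1 L, ‖w n‖ ^ 2 =
      ∑ h ∈ Finset.range M, ∑ h' ∈ Finset.range M,
        ∑ n ∈ Finset.Icc 1 L, (inner ℝ (u (n - h)) (u (n - h')) : ℝ) := by
    have e1 : ∀ n, ‖w n‖ ^ 2 = ∑ h ∈ Finset.range M, ∑ h' ∈ Finset.range M,
        (inner ℝ (u (n - h)) (u (n - h')) : ℝ) := by
      intro n
      rw [← real_inner_self_eq_norm_sq, hw_def]
      rw [sum_inner]
      exact Finset.sum_congr rfl fun h _ => inner_sum _ _ _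
    rw [Finset.sum_congr rfl fun n _ => e1 n]
    rw [Finset.sum_comm]
    exact Finset.sum_congr rfl fun h _ => Finset.sum_comm
  -- diagonal terms
  have hdiag : ∀ h < M, ∑ n ∈ Finset.Icc 1 L, (inner ℝ (u (n - h)) (u (n - h)) : ℝ) = T := by
    intro h hh
    have : ∀ n, (inner ℝ (u (n - h)) (u (n - h)) : ℝ) = (fun k => ‖u k‖ ^ 2) (n - h) := fun n =>
      real_inner_self_eq_norm_sq _
    rw [Finset.sum_congr rfl fun n _ => this n,
      sum_shift_aux (fun k => ‖u k‖ ^ 2) N h L (fun k hk => by simp [hu_supp k hk]) (by omega)]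
    exact Finset.sum_congr rfl fun k hk => by rw [hu_eq k hk]
  -- off-diagonal terms
  have hoff : ∀ h h', h < h' → h' < M →
      ∑ n ∈ Finset.Icc 1 L, (inner ℝ (u (n - h)) (u (n - h')) : ℝ) = c (h' - h) := by
    intro h h' hlt hM'
    set m : ℕ := h' - h with hm_def
    have hm1 : 1 ≤ m := by omega
    have hmM : m ≤ M - 1 := by omega
    set g : ℕ → ℝ := fun k => (inner ℝ (u (k + m)) (u k) : ℝ) with hg_def
    have e1 : ∀ n ∈ Finset.Icc 1 L, (inner ℝ (u (n - h)) (u (n - h')) : ℝ) = g (n - h') := by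
      intro n _
      simp only [hg_def]
      by_cases hn : h' < n
      · have : n - h' + m = n - h := by omega
        rw [this]
      · have h0 : n - h' = 0 := by omega
        rw [h0]
        simp [hu_supp 0 (by simp)]
    rw [Finset.sum_congr rfl e1]
    have hg_supp : ∀ k, k ∉ Finset.Icc 1 (N - m) → g k = 0 := by
      intro k hk
      rw [Finset.mem_Icc, not_and_or] at hk
      rcases hk with hk | hk
      · have : k = 0 := by omega
        subst this
        simp [hg_def, hu_supp 0 (by simp)]
      · have : k + m ∉ Finset.Icc 1 N := by rw [Finset.mem_Icc]; omega
        simp [hg_def, hu_supp _ this]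
    rw [sum_shift_aux g (N - m) h' L hg_supp (by omega)]
    simp only [hc_def]
    refine Finset.sum_congr rfl fun k hk => ?_
    rw [Finset.mem_Icc] at hk
    have h1 : u (k + m) = v (k + m) := hu_eq _ (by rw [Finset.mem_Icc]; omega)
    have h2 : u k = v k := hu_eq _ (by rw [Finset.mem_Icc]; omega)
    simp only [hg_def]
    rw [h1, h2]
  -- bound for each h: ∑_{h'} A h h' ≤ T + 2C
  have hrow : ∀ h' ∈ Finset.range M,
      ∑ h ∈ Finset.range M, ∑ n ∈ Finset.Icc 1 L, (inner ℝ (u (n - h)) (u (n - h')) : ℝ)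
        ≤ T + 2 * C := by
    intro h' hh'
    rw [Finset.mem_range] at hh'
    have hsplit : Finset.range M = Finset.range h' ∪ Finset.Ico h' M := by
      rw [Finset.range_eq_Ico, Finset.range_eq_Ico]
      rw [Finset.Ico_union_Ico_eq_Ico (by omega) (by omega)]
    rw [hsplit, Finset.sum_union (by
      rw [Finset.range_eq_Ico]
      exact Finset.Ico_disjoint_Ico_consecutive 0 h' M)]
    rw [Finset.sum_eq_sum_Ico_succ_bot (by omega : h' < M)]
    have hb1 : ∑ h ∈ Finset.range h', ∑ n ∈ Finset.Icc 1 L,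
        (inner ℝ (u (n - h)) (u (n - h')) : ℝ) ≤ C := by
      calc ∑ h ∈ Finset.range h', ∑ n ∈ Finset.Icc 1 L, (inner ℝ (u (n - h)) (u (n - h')) : ℝ)
          = ∑ h ∈ Finset.range h', c (h' - h) := by
            refine Finset.sum_congr rfl fun h hh => ?_
            rw [Finset.mem_range] at hh
            exact hoff h h' hh hh'
        _ ≤ ∑ h ∈ Finset.range h', |c (h' - h)| :=
            Finset.sum_le_sum fun h _ => le_abs_self _
        _ ≤ C := by
            rw [hC_def]
            apply sum_abs_image_le
            · intro x hx y hy hxy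
              rw [Finset.mem_range] at hx hy
              omega
            · intro x hx
              rw [Finset.mem_range] at hx
              rw [Finset.mem_Icc]
              omega
    have hb2 : ∑ h ∈ Finset.Ico (h' + 1) M, ∑ n ∈ Finset.Icc 1 L,
        (inner ℝ (u (n - h)) (u (n - h')) : ℝ) ≤ C := by
      calc ∑ h ∈ Finset.Ico (h' + 1) M, ∑ n ∈ Finset.Icc 1 L,
            (inner ℝ (u (n - h)) (u (n - h')) : ℝ)
          = ∑ h ∈ Finset.Ico (h' + 1) M, c (h - h') := by
            refine Finset.sum_congr rfl fun h hh => ?_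
            rw [Finset.mem_Ico] at hh
            rw [← hoff h' h (by omega) (by omega)]
            exact Finset.sum_congr rfl fun n _ => real_inner_comm _ _
        _ ≤ ∑ h ∈ Finset.Ico (h' + 1) M, |c (h - h')| :=
            Finset.sum_le_sum fun h _ => le_abs_self _
        _ ≤ C := by
            rw [hC_def]
            apply sum_abs_image_le
            · intro x hx y hy hxy
              rw [Finset.mem_Ico] at hx hy
              omega
            · intro x hx
              rw [Finset.mem_Ico] at hx
              rw [Finset.mem_Icc]
              omega
    have hd : ∑ n ∈ Finset.Icc 1 L, (inner ℝ (u (n - h')) (u (n - h')) : ℝ) = T :=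
      hdiag h' hh'
    linarith
  -- combine
  have hcard : ((Finset.Icc 1 L).card : ℝ) = L := by
    rw [Nat.card_Icc]
    norm_num
  have hM0 : (0 : ℝ) < M := by exact_mod_cast hM1
  have hL2N : (L : ℝ) ≤ 2 * N := by
    rw [hL_def]
    push_cast [Nat.cast_sub (by omega : 1 ≤ N + M)]
    have : (M : ℝ) ≤ N := by exact_mod_cast hMN
    linarith
  have key : (M : ℝ) ^ 2 * ‖S‖ ^ 2 ≤ 2 * N * (M * (T + 2 * C)) := by
    have h1 : ‖(M : ℕ) • S‖ ^ 2 ≤ (L : ℝ) * ∑ n ∈ Finset.Icc 1 L, ‖w n‖ ^ 2 := by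
      rw [← hMS]
      calc ‖∑ n ∈ Finset.Icc 1 L, w n‖ ^ 2
          ≤ ((Finset.Icc 1 L).card : ℝ) * ∑ n ∈ Finset.Icc 1 L, ‖w n‖ ^ 2 :=
            norm_sum_sq_le_card _ _
        _ = (L : ℝ) * ∑ n ∈ Finset.Icc 1 L, ‖w n‖ ^ 2 := by rw [hcard]
    have h2 : ∑ n ∈ Finset.Icc 1 L, ‖w n‖ ^ 2 ≤ M * (T + 2 * C) := by
      rw [hexp, Finset.sum_comm]
      calc ∑ h' ∈ Finset.range M, ∑ h ∈ Finset.range M,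
            ∑ n ∈ Finset.Icc 1 L, (inner ℝ (u (n - h)) (u (n - h')) : ℝ)
          ≤ ∑ h' ∈ Finset.range M, (T + 2 * C) := Finset.sum_le_sum hrow
        _ = M * (T + 2 * C) := by rw [Finset.sum_const, Finset.card_range, nsmul_eq_mul]
    have h3 : ‖(M : ℕ) • S‖ ^ 2 = (M : ℝ) ^ 2 * ‖S‖ ^ 2 := by
      rw [← Nat.cast_smul_eq_nsmul ℝ, norm_smul]
      simp [abs_of_nonneg (Nat.cast_nonneg M : (0:ℝ) ≤ M)]
      ring
    have h4 : (L : ℝ) * ∑ n ∈ Finset.Icc 1 L, ‖w n‖ ^ 2 ≤ (2 * N) * (M * (T + 2 * C)) := by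
      have hsum_nonneg : 0 ≤ ∑ n ∈ Finset.Icc 1 L, ‖w n‖ ^ 2 :=
        Finset.sum_nonneg fun n _ => by positivity
      have hL0 : (0 : ℝ) ≤ L := Nat.cast_nonneg _
      have hrhs : (0:ℝ) ≤ M * (T + 2 * C) := by positivity
      calc (L : ℝ) * ∑ n ∈ Finset.Icc 1 L, ‖w n‖ ^ 2
          ≤ (L : ℝ) * (M * (T + 2 * C)) := by
            exact mul_le_mul_of_nonneg_left h2 hL0
        _ ≤ (2 * N) * (M * (T + 2 * C)) := mul_le_mul_of_nonneg_right hL2N hrhs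
    calc (M : ℝ) ^ 2 * ‖S‖ ^ 2 = ‖(M : ℕ) • S‖ ^ 2 := h3.symm
      _ ≤ (L : ℝ) * ∑ n ∈ Finset.Icc 1 L, ‖w n‖ ^ 2 := h1
      _ ≤ 2 * N * (M * (T + 2 * C)) := h4
  have main : ‖S‖ ^ 2 ≤ 2 * (M : ℝ)⁻¹ * N * T + 4 * (M : ℝ)⁻¹ * N * C := by
    have heq : 2 * (M : ℝ)⁻¹ * N * T + 4 * (M : ℝ)⁻¹ * N * C
        = 2 * N * (M * (T + 2 * C)) / M ^ 2 := by
      field_simp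
      ring
    rw [heq, le_div_iff₀ (by positivity)]
    calc ‖S‖ ^ 2 * (M:ℝ) ^ 2 = (M : ℝ) ^ 2 * ‖S‖ ^ 2 := by ring
      _ ≤ 2 * N * (M * (T + 2 * C)) := key
  simpa only [hC_def, hc_def] using main
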